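/- Let (𝒜, ∧, 1, [·,·]) be a Gerstenhaber–Jacobi algebra with 𝒜^n = 0 for n < −1, such that for every n ≥ 1 the space 𝒜^n is spanned by wedge products Y∧Z with Y ∈ 𝒜^y, Z ∈ 𝒜^z, −1 ≤ y,z < n, y+z+1 = n, and such that for every homogeneous W of degree −1 or 0, if W∧Z = 0 for all Z ∈ 𝒜^0 then W = 0. Let d_* : 𝒜 → 𝒜 be a linear map of degree +1 satisfying d_*(Y∧Z) = (d_*Y)∧Z + (−1)^{y+1} Y∧(d_*Z) − (d_*1)∧Y∧Z. If the derivation identity d_*[X,Y] = [d_*X,Y] + (−1)^x[X,d_*Y] holds for all X,Y ∈ 𝒜^0 and also for all X ∈ 𝒜^{−1} ∪ 𝒜^0 with Y = 1, then it holds for all homogeneous X,Y ∈ 𝒜. -/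

import Mathlib

/-! STATEMENT 19: in a Gerstenhaber–Jacobi algebra which is generated (via
wedge products) by its elements of low degree and in which wedging against
degree-0 elements is faithful in degrees `-1` and `0`, a degree `+1` operator
`d_*` satisfying the Leibniz-type rule for the product is a derivation of the
bracket as soon as it is one on `𝒜^0 × 𝒜^0` and on `(𝒜^{-1} ∪ 𝒜^0) × {1}`. -/

noncomputable section

namespace JacobiRevisited19

private lemma epsE (n : ℤ) : (((-1 : ℤˣ) ^ n : ℤˣ) : ℤ) = if Even n then 1 else -1 := by
  rcases Int.even_or_odd n with ⟨m, hm⟩ | ⟨m, hm⟩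
  · subst hm
    rw [if_pos ⟨m, rfl⟩, zpow_add, ← mul_zpow]
    norm_num
  · subst hm
    rw [if_neg (by simp [Int.even_add_one, parity_simps]), zpow_add, two_mul, zpow_add,
      ← mul_zpow]
    norm_num

/-- The "defect" of the derivation identity. -/
def Dd {k 𝒜 : Type*} [Field k] [AddCommGroup 𝒜] [Module k 𝒜]
    (br : 𝒜 →ₗ[k] 𝒜 →ₗ[k] 𝒜) (d : 𝒜 →ₗ[k] 𝒜) (x : ℤ) (X Y : 𝒜) : 𝒜 :=
  d (br X Y) - br (d X) Y - (((-1 : ℤˣ) ^ x : ℤˣ) : ℤ) • br X (d Y)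

theorem statement19 (k : Type*) [Field k] [CharZero k]
    (𝒜 : Type*) [AddCommGroup 𝒜] [Module k 𝒜]
    -- the grading
    (G : ℤ → Submodule k 𝒜)
    -- the (bilinear) graded Lie bracket, associative product, and unit
    (br wg : 𝒜 →ₗ[k] 𝒜 →ₗ[k] 𝒜) (e : 𝒜)
    -- Gerstenhaber–Jacobi algebra axioms (for homogeneous elements)
    (he : e ∈ G (-1)) (hunit : ∀ X : 𝒜, wg e X = X)
    (hbr_grade : ∀ (x y : ℤ) (X Y : 𝒜), X ∈ G x → Y ∈ G y → br X Y ∈ G (x + y))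
    (hbr_skew : ∀ (x y : ℤ) (X Y : 𝒜), X ∈ G x → Y ∈ G y →
      br X Y = -((((-1 : ℤˣ) ^ (x * y) : ℤˣ) : ℤ) • br Y X))
    (hbr_jacobi : ∀ (x y z : ℤ) (X Y Z : 𝒜), X ∈ G x → Y ∈ G y → Z ∈ G z →
      br (br X Y) Z =
        br X (br Y Z) - (((-1 : ℤˣ) ^ (x * y) : ℤˣ) : ℤ) • br Y (br X Z))
    (hwg_grade : ∀ (x y : ℤ) (X Y : 𝒜), X ∈ G x → Y ∈ G y → wg X Y ∈ G (x + y + 1))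
    (hwg_assoc : ∀ X Y Z : 𝒜, wg (wg X Y) Z = wg X (wg Y Z))
    (hwg_comm : ∀ (x y : ℤ) (X Y : 𝒜), X ∈ G x → Y ∈ G y →
      wg X Y = (((-1 : ℤˣ) ^ ((x + 1) * (y + 1)) : ℤˣ) : ℤ) • wg Y X)
    -- the generalized Leibniz rule, with `D̃(X) = [X,1]`
    (hleibniz : ∀ (x y z : ℤ) (X Y Z : 𝒜), X ∈ G x → Y ∈ G y → Z ∈ G z →
      br X (wg Y Z) =
        wg (br X Y) Z + (((-1 : ℤˣ) ^ (x * (y + 1)) : ℤˣ) : ℤ) • wg Y (br X Z) -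
          wg (br X e) (wg Y Z))
    -- `𝒜^n = 0` for `n < -1`
    (hbot : ∀ n : ℤ, n < -1 → G n = ⊥)
    -- for `n ≥ 1`, `𝒜^n` is spanned by wedge products of lower degrees
    (hspan : ∀ n : ℤ, 1 ≤ n → G n ≤ Submodule.span k
      {W : 𝒜 | ∃ (y z : ℤ) (Y Z : 𝒜), -1 ≤ y ∧ y < n ∧ -1 ≤ z ∧ z < n ∧
        y + z + 1 = n ∧ Y ∈ G y ∧ Z ∈ G z ∧ W = wg Y Z})
    -- faithfulness in degrees `-1` and `0`
    (hfaithful : ∀ W : 𝒜, (W ∈ G (-1) ∨ W ∈ G 0) →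
      (∀ Z ∈ G 0, wg W Z = 0) → W = 0)
    -- the degree `+1` operator `d_*` and its Leibniz-type rule
    (d : 𝒜 →ₗ[k] 𝒜)
    (hd_grade : ∀ (n : ℤ) (X : 𝒜), X ∈ G n → d X ∈ G (n + 1))
    (hd_wg : ∀ (y z : ℤ) (Y Z : 𝒜), Y ∈ G y → Z ∈ G z →
      d (wg Y Z) =
        wg (d Y) Z + (((-1 : ℤˣ) ^ (y + 1) : ℤˣ) : ℤ) • wg Y (d Z) -
          wg (d e) (wg Y Z))
    -- the derivation identity holds on `𝒜^0 × 𝒜^0` ...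
    (h00 : ∀ X Y : 𝒜, X ∈ G 0 → Y ∈ G 0 →
      d (br X Y) = br (d X) Y + br X (d Y))
    -- ... and for all `X ∈ 𝒜^{-1} ∪ 𝒜^0` with `Y = 1`
    (hunit_case : ∀ (x : ℤ) (X : 𝒜), (x = -1 ∨ x = 0) → X ∈ G x →
      d (br X e) = br (d X) e + (((-1 : ℤˣ) ^ x : ℤˣ) : ℤ) • br X (d e)) :
    -- conclusion: it holds for all homogeneous elements
    ∀ (x y : ℤ) (X Y : 𝒜), X ∈ G x → Y ∈ G y →
      d (br X Y) = br (d X) Y + (((-1 : ℤˣ) ^ x : ℤˣ) : ℤ) • br X (d Y) := by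
  have hde : d e ∈ G 0 := by simpa using hd_grade (-1) e he
  -- applied-form linearity lemmas for integer scalars
  have dz : ∀ (n : ℤ) (a : 𝒜), d (n • a) = n • d a := fun n a => map_zsmul d n a
  have brz2 : ∀ (n : ℤ) (a b : 𝒜), br a (n • b) = n • br a b :=
    fun n a b => map_zsmul (br a) n b
  have brz1 : ∀ (n : ℤ) (a b : 𝒜), br (n • a) b = n • br a b :=
    fun n a b => map_zsmul (LinearMap.flip br b) n a
  have wgz2 : ∀ (n : ℤ) (a b : 𝒜), wg a (n • b) = n • wg a b :=
    fun n a b => map_zsmul (wg a) n b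
  have wgz1 : ∀ (n : ℤ) (a b : 𝒜), wg (n • a) b = n • wg a b :=
    fun n a b => map_zsmul (LinearMap.flip wg b) n a
  -- the sign-twisted symmetry of the defect
  have L1 : ∀ (x y : ℤ) (X Y : 𝒜), X ∈ G x → Y ∈ G y →
      Dd br d x X Y = -((((-1 : ℤˣ) ^ (x * y) : ℤˣ) : ℤ) • Dd br d y Y X) := by
    intro x y X Y hX hY
    simp only [Dd]
    rw [hbr_skew x y X Y hX hY, hbr_skew (x + 1) y (d X) Y (hd_grade x X hX) hY,
      hbr_skew x (y + 1) X (d Y) hX (hd_grade y Y hY)]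
    simp only [map_neg, dz, brz1, brz2, smul_neg, smul_smul, smul_sub, neg_sub, sub_neg_eq_add,
      epsE]
    by_cases hx : Even x <;> by_cases hy : Even y <;>
    · simp [Int.even_add, Int.even_mul, Int.even_sub, hx, hy, ← Int.not_even_iff_odd]
      abel
  -- the defect against a wedge product
  have L2 : ∀ (x y z : ℤ) (X Y Z : 𝒜), X ∈ G x → Y ∈ G y → Z ∈ G z →
      Dd br d x X (wg Y Z) = wg (Dd br d x X Y) Z
        + (((-1 : ℤˣ) ^ ((x + 1) * (y + 1)) : ℤˣ) : ℤ) • wg Y (Dd br d x X Z)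
        - wg (Dd br d x X e) (wg Y Z) := by
    intro x y z X Y Z hX hY hZ
    have m1 : br X Y ∈ G (x + y) := hbr_grade x y X Y hX hY
    have m2 : br X Z ∈ G (x + z) := hbr_grade x z X Z hX hZ
    have m3 : br X e ∈ G (x + -1) := hbr_grade x (-1) X e hX he
    have m4 : wg Y Z ∈ G (y + z + 1) := hwg_grade y z Y Z hY hZ
    have mdX : d X ∈ G (x + 1) := hd_grade x X hX
    have mdY : d Y ∈ G (y + 1) := hd_grade y Y hY
    have mdZ : d Z ∈ G (z + 1) := hd_grade z Z hZ
    simp only [Dd]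
    rw [hd_wg y z Y Z hY hZ, hleibniz x y z X Y Z hX hY hZ]
    simp only [map_add, map_sub, LinearMap.add_apply, LinearMap.sub_apply, dz, brz1, brz2,
      wgz1, wgz2, smul_add, smul_sub]
    rw [hd_wg (x + y) z (br X Y) Z m1 hZ, hd_wg y (x + z) Y (br X Z) hY m2,
      hd_wg (x + -1) (y + z + 1) (br X e) (wg Y Z) m3 m4,
      hd_wg y z Y Z hY hZ,
      hleibniz (x + 1) y z (d X) Y Z mdX hY hZ,
      hleibniz x (y + 1) z X (d Y) Z hX mdY hZ,
      hleibniz x y (z + 1) X Y (d Z) hX hY mdZ,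
      hleibniz x 0 (y + z + 1) X (d e) (wg Y Z) hX hde m4,
      hleibniz x y z X Y Z hX hY hZ]
    simp only [map_add, map_sub, LinearMap.add_apply, LinearMap.sub_apply, dz, brz1, brz2,
      wgz1, wgz2, smul_add, smul_sub, smul_smul, epsE]
    by_cases hx : Even x <;> by_cases hy : Even y <;> by_cases hz : Even z <;>
    · simp [Int.even_add, Int.even_mul, Int.even_sub, hx, hy, hz, ← Int.not_even_iff_odd]
      abel
  -- the low-degree cases
  have lowU : ∀ (x : ℤ) (X : 𝒜), (x = -1 ∨ x = 0) → X ∈ G x → Dd br d x X e = 0 := by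
    intro x X hx hX
    simp only [Dd, hunit_case x X hx hX]
    abel
  have low00 : ∀ X Y : 𝒜, X ∈ G 0 → Y ∈ G 0 → Dd br d 0 X Y = 0 := by
    intro X Y hX hY
    simp only [Dd, h00 X Y hX hY, zpow_zero, Units.val_one, one_smul]
    abel
  have low0m1 : ∀ X Y : 𝒜, X ∈ G 0 → Y ∈ G (-1) → Dd br d 0 X Y = 0 := by
    intro X Y hX hY
    have mem0 : Dd br d 0 X Y ∈ G 0 := by
      have h1 : d (br X Y) ∈ G 0 := by
        simpa using hd_grade _ _ (hbr_grade 0 (-1) X Y hX hY)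
      have h2 : br (d X) Y ∈ G 0 := by
        simpa using hbr_grade 1 (-1) _ _ (hd_grade 0 X hX) hY
      have h3 : br X (d Y) ∈ G 0 := by
        simpa using hbr_grade 0 0 _ _ hX (hd_grade (-1) Y hY)
      exact Submodule.sub_mem _ (Submodule.sub_mem _ h1 h2) (zsmul_mem h3 _)
    refine hfaithful _ (Or.inr mem0) ?_
    intro Z hZ
    have h2 := L2 0 (-1) 0 X Y Z hX hY hZ
    have hYZ : wg Y Z ∈ G 0 := by simpa using hwg_grade (-1) 0 Y Z hY hZ
    rw [low00 X (wg Y Z) hX hYZ, low00 X Z hX hZ, lowU 0 X (Or.inr rfl) hX] at h2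
    simpa using h2.symm
  have lowm10 : ∀ X Y : 𝒜, X ∈ G (-1) → Y ∈ G 0 → Dd br d (-1) X Y = 0 := by
    intro X Y hX hY
    rw [L1 (-1) 0 X Y hX hY, low0m1 Y X hY hX, smul_zero, neg_zero]
  have lowm1m1 : ∀ X Y : 𝒜, X ∈ G (-1) → Y ∈ G (-1) → Dd br d (-1) X Y = 0 := by
    intro X Y hX hY
    have memm1 : Dd br d (-1) X Y ∈ G (-1) := by
      have h1 : d (br X Y) ∈ G (-1) := by
        simpa using hd_grade _ _ (hbr_grade (-1) (-1) X Y hX hY)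
      have h2 : br (d X) Y ∈ G (-1) := by
        simpa using hbr_grade 0 (-1) _ _ (hd_grade (-1) X hX) hY
      have h3 : br X (d Y) ∈ G (-1) := by
        simpa using hbr_grade (-1) 0 _ _ hX (hd_grade (-1) Y hY)
      exact Submodule.sub_mem _ (Submodule.sub_mem _ h1 h2) (zsmul_mem h3 _)
    refine hfaithful _ (Or.inl memm1) ?_
    intro Z hZ
    have h2 := L2 (-1) (-1) 0 X Y Z hX hY hZ
    have hYZ : wg Y Z ∈ G 0 := by simpa using hwg_grade (-1) 0 Y Z hY hZ
    rw [lowm10 X (wg Y Z) hX hYZ, lowm10 X Z hX hZ, lowU (-1) X (Or.inl rfl) hX] at h2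
    simpa using h2.symm
  -- main induction on the total degree
  have key : ∀ (m : ℕ) (x y : ℤ) (X Y : 𝒜), X ∈ G x → Y ∈ G y →
      x + y + 2 ≤ (m : ℤ) → Dd br d x X Y = 0 := by
    intro m
    induction m using Nat.strong_induction_on with
    | _ m ih =>
      intro x y X Y hX hY hsum
      by_cases hx2 : x ≤ -2
      · have hX0 : X = 0 := by
          rw [hbot x (by omega)] at hX
          simpa using hX
        simp [Dd, hX0]
      by_cases hy2 : y ≤ -2
      · have hY0 : Y = 0 := by
          rw [hbot y (by omega)] at hY
          simpa using hY
        simp [Dd, hY0]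
      push_neg at hx2 hy2
      -- span reduction when the second degree is ≥ 1
      have red : ∀ (p q : ℤ) (P Q : 𝒜), P ∈ G p → Q ∈ G q → -1 ≤ p → 1 ≤ q →
          p + q + 2 ≤ (m : ℤ) → Dd br d p P Q = 0 := by
        intro p q P Q hP hQ hp hq hpq
        refine Submodule.span_induction ?_ ?_ ?_ ?_ (hspan q hq hQ)
        · rintro W ⟨y₁, z₁, Y₁, Z₁, hy1, hy1', hz1, hz1', hsum1, hY1, hZ1, rfl⟩
          rw [L2 p y₁ z₁ P Y₁ Z₁ hP hY1 hZ1,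
            ih (m - 1) (by omega) p y₁ P Y₁ hP hY1 (by omega),
            ih (m - 1) (by omega) p z₁ P Z₁ hP hZ1 (by omega),
            ih (m - 1) (by omega) p (-1) P e hP he (by omega)]
          simp
        · simp [Dd]
        · intro a b _ _ ha hb
          have hab : Dd br d p P (a + b) = Dd br d p P a + Dd br d p P b := by
            simp only [Dd, map_add, smul_add]
            abel
          rw [hab, ha, hb, add_zero]
        · intro c a _ ha
          have hca : Dd br d p P (c • a) = c • Dd br d p P a := by
            simp only [Dd, map_smul, smul_sub,
              smul_comm ((((-1 : ℤˣ) ^ p : ℤˣ) : ℤ)) c]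
          rw [hca, ha, smul_zero]
      by_cases hy1 : 1 ≤ y
      · exact red x y X Y hX hY (by omega) hy1 hsum
      by_cases hx1 : 1 ≤ x
      · rw [L1 x y X Y hX hY, red y x Y X hY hX (by omega) hx1 (by omega), smul_zero,
          neg_zero]
      have hx' : x = -1 ∨ x = 0 := by omega
      have hy' : y = -1 ∨ y = 0 := by omega
      rcases hx' with rfl | rfl <;> rcases hy' with rfl | rfl
      · exact lowm1m1 X Y hX hY
      · exact lowm10 X Y hX hY
      · exact low0m1 X Y hX hY
      · exact low00 X Y hX hY
  intro x y X Y hX hY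
  have h := key (x + y + 2).toNat x y X Y hX hY (by omega)
  simp only [Dd] at h
  rw [sub_sub, sub_eq_zero] at h
  exact h

end JacobiRevisited19
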